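/- Let f₀ ∈ L²(ℝ^d) ∩ L¹(ℝ^d) be a compactly supported complex-valued function. Then f = Re(F^{-1}f₀) belongs to L²(ℝ^d) ∩ B^1_{R_f}(ℝ^d) with activation σ = cos, for some 0 < R_f < ∞; in fact if f₀ is supported in the ball of radius R_f then ‖f‖_{B^1_{R_f}(ℝ^d)} ≤ (2π)^{-d/2} ‖f₀‖_{L¹(ℝ^d)}. -/

import Mathlib

open MeasureTheory Real
open scoped ENNReal NNReal

set_option maxHeartbeats 1000000

noncomputable section

/-- Euclidean space `ℝ^d`. -/
abbrev Rd (d : ℕ) := EuclideanSpace ℝ (Fin d)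

/-- The set of admissible representing measures for `g` on `Ω` with activation `σ`
and support radius `R`: probability measures on the parameter space `ℝ × ℝ^d × ℝ`
whose `w`-marginal is supported in the closed ball of radius `R`, representing
`g x = ∫ a σ(wᵀx + b) dρ` for all `x ∈ Ω`. -/
def barronReps {d : ℕ} (σ : ℝ → ℝ) (Ω : Set (Rd d)) (R : ℝ) (g : Rd d → ℝ) :
    Set (Measure (ℝ × Rd d × ℝ)) :=
  {ρ | IsProbabilityMeasure ρ ∧ (∀ᵐ q ∂ρ, ‖q.2.1‖ ≤ R) ∧
    ∀ x ∈ Ω, g x = ∫ q, q.1 * σ (inner ℝ q.2.1 x + q.2.2) ∂ρ}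

/-- The Barron norm `‖g‖_{B^1_R(Ω)} = inf_ρ ∫ |a| dρ`. -/
def barronNorm {d : ℕ} (σ : ℝ → ℝ) (Ω : Set (Rd d)) (R : ℝ) (g : Rd d → ℝ) : ℝ≥0∞ :=
  ⨅ ρ ∈ barronReps σ Ω R g, ∫⁻ q, (‖q.1‖₊ : ℝ≥0∞) ∂ρ

/-- The Fourier transform with the normalization `(2π)^{-d/2} ∫ e^{-i x·ξ} f(x) dx`. -/
def FT {d : ℕ} (f : Rd d → ℂ) (ξ : Rd d) : ℂ :=
  ((2 * π) ^ (-(d : ℝ) / 2) : ℝ) • ∫ x : Rd d, Complex.exp (-((inner ℝ x ξ : ℝ) : ℂ) * Complex.I) * f x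

/-- The inverse Fourier transform `(2π)^{-d/2} ∫ e^{i x·ξ} f(ξ) dξ`. -/
def FTinv {d : ℕ} (f : Rd d → ℂ) (x : Rd d) : ℂ :=
  ((2 * π) ^ (-(d : ℝ) / 2) : ℝ) • ∫ ξ : Rd d, Complex.exp (((inner ℝ x ξ : ℝ) : ℂ) * Complex.I) * f ξ

lemma re_exp_mul_helper (r : ℝ) (z : ℂ) :
    (Complex.exp (r * Complex.I) * z).re = ‖z‖ * Real.cos (r + z.arg) := by
  conv_lhs => rw [← Complex.norm_mul_exp_arg_mul_I z]
  rw [mul_left_comm, ← Complex.exp_add, ← add_mul, ← Complex.ofReal_add, Complex.re_ofReal_mul,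
    Complex.exp_ofReal_mul_I_re]

theorem part1meas {d : ℕ} (f₀ : Rd d → ℂ) (hm : StronglyMeasurable f₀)
    (hL1 : Integrable f₀ volume) (hL2 : MemLp f₀ 2 volume) :
    MemLp (fun x => (FTinv f₀ x).re) 2 volume := by
  classical
  set c : ℝ := ((2 * π) ^ (-(d : ℝ) / 2) : ℝ) with hcdef
  set g : Rd d → ℂ :=
    fun x => ∫ ξ : Rd d, Complex.exp (((inner ℝ x ξ : ℝ) : ℂ) * Complex.I) * f₀ ξ with hgdef
  have hker : Continuous fun z : Rd d × Rd d =>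
      Complex.exp (((inner ℝ z.1 z.2 : ℝ) : ℂ) * Complex.I) :=
    Complex.continuous_exp.comp
      ((Complex.continuous_ofReal.comp continuous_inner).mul continuous_const)
  have hkerabs : ∀ (x ξ : Rd d), ‖Complex.exp (((inner ℝ x ξ : ℝ) : ℂ) * Complex.I)‖ = 1 := by
    intro x ξ
    rw [Complex.norm_exp_ofReal_mul_I]
  have hInt : ∀ x : Rd d,
      Integrable (fun ξ => Complex.exp (((inner ℝ x ξ : ℝ) : ℂ) * Complex.I) * f₀ ξ) volume := by
    intro x
    refine hL1.bdd_mul ((hker.comp (Continuous.prodMk_right x)).aestronglyMeasurable)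
      (c := 1) (Filter.Eventually.of_forall fun ξ => (hkerabs x ξ).le)
  have hgcont : Continuous g := by
    rw [hgdef]
    refine continuous_of_dominated (fun x => (hInt x).aestronglyMeasurable) (fun x => ?_)
      hL1.norm ?_
    · filter_upwards with ξ
      rw [norm_mul, hkerabs, one_mul]
    · filter_upwards with ξ
      exact (hker.comp (continuous_id.prodMk continuous_const)).mul continuous_const
  -- bound on ‖g‖
  set M : ℝ := ∫ ξ : Rd d, ‖f₀ ξ‖ with hMdef
  have hgbd : ∀ v : Rd d, ‖g v‖ ≤ M := by
    intro v
    refine (norm_integral_le_integral_norm _).trans (le_of_eq ?_)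
    refine integral_congr_ae (Filter.Eventually.of_forall fun ξ => ?_)
    beta_reduce
    rw [norm_mul, hkerabs, one_mul]
  -- square integrability of ‖f₀‖²
  have haint : Integrable (fun ξ : Rd d => ‖f₀ ξ‖ ^ 2) volume := by
    have h := hL2.integrable_norm_rpow two_ne_zero ENNReal.ofNat_ne_top
    refine h.congr (Filter.Eventually.of_forall fun ξ => ?_)
    beta_reduce
    have : ((2 : ℝ≥0∞).toReal) = ((2:ℕ):ℝ) := by norm_num
    simp only [this, Real.rpow_natCast]
  set L2r : ℝ := ∫ ξ : Rd d, ‖f₀ ξ‖ ^ 2 with hL2rdef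
  have hL2r0 : 0 ≤ L2r := integral_nonneg fun _ => sq_nonneg _
  -- Gaussian integrability for all widths
  have hgaussAll : ∀ s : ℝ, 0 < s → Integrable (fun v : Rd d => rexp (-s * ‖v‖ ^ 2)) volume := by
    intro s hs
    have hsC : 0 < ((s : ℂ)).re := by simpa using hs
    have h0 := (GaussianFourier.integrable_cexp_neg_mul_sq_norm_add hsC 0 (0 : Rd d)).norm
    refine h0.congr (Filter.Eventually.of_forall fun v => ?_)
    beta_reduce
    rw [show (-(s : ℂ) * ((‖v‖ : ℝ) : ℂ) ^ 2 + 0 * ((inner ℝ (0 : Rd d) v : ℝ) : ℂ))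
        = ((-s * ‖v‖ ^ 2 : ℝ) : ℂ) by push_cast; ring,
      Complex.norm_exp, Complex.ofReal_re]
  -- the key Gaussian-regularized bound
  have key : ∀ t : ℝ, 0 < t →
      ∫ v : Rd d, ‖g v‖ ^ 2 * rexp (-t * ‖v‖ ^ 2) ≤ (2 * π) ^ d * L2r := by
    intro t ht
    have htC : 0 < ((t : ℂ)).re := by simpa using ht
    -- Gaussian integrability
    have hgauss : Integrable (fun v : Rd d => rexp (-t * ‖v‖ ^ 2)) volume := hgaussAll t ht
    -- the complex-valued regularized integral
    set J : ℂ := ∫ v : Rd d, ((rexp (-t * ‖v‖ ^ 2) : ℝ) : ℂ) *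
      (g v * (starRingEnd ℂ) (g v)) with hJdef
    have hstep0 : ∫ v : Rd d, ‖g v‖ ^ 2 * rexp (-t * ‖v‖ ^ 2) = J.re := by
      have : J = ((∫ v : Rd d, ‖g v‖ ^ 2 * rexp (-t * ‖v‖ ^ 2) : ℝ) : ℂ) := by
        rw [hJdef,
          show ((∫ v : Rd d, ‖g v‖ ^ 2 * rexp (-t * ‖v‖ ^ 2) : ℝ) : ℂ)
            = ∫ v : Rd d, ((‖g v‖ ^ 2 * rexp (-t * ‖v‖ ^ 2) : ℝ) : ℂ) from integral_ofReal.symm]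
        refine integral_congr_ae (Filter.Eventually.of_forall fun v => ?_)
        beta_reduce
        rw [Complex.mul_conj, Complex.normSq_eq_norm_sq]
        push_cast
        ring
      rw [this, Complex.ofReal_re]
    -- expand the square and swap integrals
    set F : Rd d → Rd d × Rd d → ℂ := fun v p =>
      ((rexp (-t * ‖v‖ ^ 2) : ℝ) : ℂ) *
        ((Complex.exp (((inner ℝ v p.1 : ℝ) : ℂ) * Complex.I) * f₀ p.1) *
          (starRingEnd ℂ) (Complex.exp (((inner ℝ v p.2 : ℝ) : ℂ) * Complex.I) * f₀ p.2)) with hFdef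
    have hJ1 : J = ∫ v : Rd d, ∫ p : Rd d × Rd d, F v p ∂(volume.prod volume) := by
      rw [hJdef]
      refine integral_congr_ae (Filter.Eventually.of_forall fun v => ?_)
      beta_reduce
      rw [hgdef]
      beta_reduce
      rw [← integral_conj, ← integral_prod_mul, ← integral_const_mul]
    have hFnorm : ∀ (v : Rd d) (p : Rd d × Rd d),
        ‖F v p‖ = rexp (-t * ‖v‖ ^ 2) * (‖f₀ p.1‖ * ‖f₀ p.2‖) := by
      intro v p
      rw [hFdef]
      simp only [norm_mul, RCLike.norm_conj, hkerabs, Complex.norm_real, Real.norm_eq_abs,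
        abs_of_nonneg (Real.exp_nonneg _), one_mul]
    have hFaesm : AEStronglyMeasurable (Function.uncurry F)
        ((volume : Measure (Rd d)).prod ((volume : Measure (Rd d)).prod volume)) := by
      apply AEStronglyMeasurable.mul
      · exact (Complex.continuous_ofReal.comp
          ((Real.continuous_exp.comp (continuous_const.mul
            ((continuous_norm.comp continuous_fst).pow 2))))).aestronglyMeasurable
      · apply AEStronglyMeasurable.mul
        · exact AEStronglyMeasurable.mul
            ((hker.comp (continuous_fst.prodMk (continuous_fst.comp continuous_snd))).aestronglyMeasurable)
            (hL1.aestronglyMeasurable.comp_fst.comp_snd)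
        · exact Continuous.comp_aestronglyMeasurable continuous_star
            (AEStronglyMeasurable.mul
              ((hker.comp (continuous_fst.prodMk (continuous_snd.comp continuous_snd))).aestronglyMeasurable)
              (hL1.aestronglyMeasurable.comp_snd.comp_snd))
    have hFint : Integrable (Function.uncurry F)
        ((volume : Measure (Rd d)).prod ((volume : Measure (Rd d)).prod volume)) := by
      have hbd : Integrable (fun z : Rd d × Rd d × Rd d =>
          rexp (-t * ‖z.1‖ ^ 2) * (‖f₀ z.2.1‖ * ‖f₀ z.2.2‖))
          ((volume : Measure (Rd d)).prod ((volume : Measure (Rd d)).prod volume)) :=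
        hgauss.mul_prod (hL1.norm.mul_prod hL1.norm)
      refine hbd.mono' hFaesm (Filter.Eventually.of_forall fun z => ?_)
      rw [Function.uncurry, hFnorm]
    have hJ2 : J = ∫ p : Rd d × Rd d, ∫ v : Rd d, F v p ∂volume ∂(volume.prod volume) := by
      rw [hJ1]; exact integral_integral_swap hFint
    -- evaluate the inner Gaussian integral
    set Kc : Rd d → ℂ := fun u =>
      (↑π / (t : ℂ)) ^ ((Module.finrank ℝ (Rd d) : ℂ) / 2) *
        Complex.exp (Complex.I ^ 2 * (‖u‖ : ℂ) ^ 2 / (4 * (t : ℂ))) with hKcdef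
    have hCp : ∀ p : Rd d × Rd d,
        (∫ v : Rd d, F v p ∂volume) = f₀ p.1 * (starRingEnd ℂ) (f₀ p.2) * Kc (p.1 - p.2) := by
      intro p
      have hptw : ∀ v : Rd d, F v p = (f₀ p.1 * (starRingEnd ℂ) (f₀ p.2)) *
          Complex.exp (-(t : ℂ) * (‖v‖ : ℂ) ^ 2 +
            Complex.I * ((inner ℝ (p.1 - p.2) v : ℝ) : ℂ)) := by
        intro v
        rw [hFdef]
        simp only [map_mul, ← Complex.exp_conj, Complex.conj_ofReal, Complex.conj_I, mul_neg]
        have hinner : (inner ℝ (p.1 - p.2) v : ℝ) = (inner ℝ v p.1 : ℝ) - (inner ℝ v p.2 : ℝ) := by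
          rw [inner_sub_left, real_inner_comm p.1 v, real_inner_comm p.2 v]
        have harg : -(t : ℂ) * (‖v‖ : ℂ) ^ 2 + Complex.I * ((inner ℝ (p.1 - p.2) v : ℝ) : ℂ)
            = ((-t * ‖v‖ ^ 2 : ℝ) : ℂ) + (((inner ℝ v p.1 : ℝ) : ℂ) * Complex.I
              + -(((inner ℝ v p.2 : ℝ) : ℂ) * Complex.I)) := by
          rw [hinner]; push_cast; ring
        rw [harg, Complex.exp_add, Complex.exp_add, ← Complex.ofReal_exp]
        ring
      rw [integral_congr_ae (Filter.Eventually.of_forall hptw), integral_const_mul,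
        GaussianFourier.integral_cexp_neg_mul_sq_norm_add htC Complex.I (p.1 - p.2)]
    -- the real Gaussian kernel
    set Kr : Rd d → ℝ := fun u => (π / t) ^ ((d : ℝ) / 2) * rexp (-‖u‖ ^ 2 / (4 * t)) with hKrdef
    have hKr0 : ∀ u, 0 ≤ Kr u := fun u => by rw [hKrdef]; beta_reduce; positivity
    have hKrcont : Continuous Kr := by
      rw [hKrdef]
      exact continuous_const.mul (Real.continuous_exp.comp
        (((continuous_norm.pow 2).neg).div_const _))
    have hKcabs : ∀ u : Rd d, ‖Kc u‖ = Kr u := by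
      intro u
      rw [hKcdef, hKrdef]
      beta_reduce
      rw [norm_mul]
      congr 1
      · rw [show ((Module.finrank ℝ (Rd d) : ℂ) / 2) = (((d : ℝ) / 2 : ℝ) : ℂ) by
          rw [finrank_euclideanSpace_fin]; push_cast; ring]
        rw [show (↑π / (t : ℂ)) = ((π / t : ℝ) : ℂ) by push_cast; ring]
        rw [Complex.norm_cpow_eq_rpow_re_of_pos (by positivity),
          Complex.ofReal_re]
      · rw [show (Complex.I ^ 2 * ((‖u‖ : ℝ) : ℂ) ^ 2 / (4 * (t : ℂ)))
            = ((-‖u‖ ^ 2 / (4 * t) : ℝ) : ℂ) by rw [Complex.I_sq]; push_cast; ring]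
        rw [Complex.norm_exp, Complex.ofReal_re]
    have hJnorm : ‖J‖ ≤
        ∫ p : Rd d × Rd d, ‖f₀ p.1‖ * ‖f₀ p.2‖ * Kr (p.1 - p.2) ∂(volume.prod volume) := by
      rw [hJ2, integral_congr_ae (Filter.Eventually.of_forall hCp)]
      refine (norm_integral_le_integral_norm _).trans (le_of_eq ?_)
      refine integral_congr_ae (Filter.Eventually.of_forall fun p => ?_)
      beta_reduce
      rw [norm_mul, norm_mul, RCLike.norm_conj, hKcabs]
    -- value of the Gaussian kernel integral
    have hgauss4t : Integrable (fun u : Rd d => rexp (-(1 / (4 * t)) * ‖u‖ ^ 2)) volume :=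
      hgaussAll _ (by positivity)
    have hKrint : Integrable Kr volume := by
      rw [hKrdef]
      refine Integrable.const_mul ?_ _
      refine hgauss4t.congr (Filter.Eventually.of_forall fun u => ?_)
      beta_reduce
      congr 1
      field_simp
    have hKrval : ∫ u : Rd d, Kr u = (2 * π) ^ d := by
      rw [hKrdef]
      beta_reduce
      rw [MeasureTheory.integral_const_mul]
      rw [integral_congr_ae (Filter.Eventually.of_forall (fun u : Rd d => by
        beta_reduce
        rw [show -‖u‖ ^ 2 / (4 * t) = -(1 / (4 * t)) * ‖u‖ ^ 2 by field_simp] :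
          ∀ u : Rd d, rexp (-‖u‖ ^ 2 / (4 * t)) = rexp (-(1 / (4 * t)) * ‖u‖ ^ 2)))]
      rw [GaussianFourier.integral_rexp_neg_mul_sq_norm (by positivity : (0:ℝ) < 1 / (4 * t))]
      rw [finrank_euclideanSpace_fin]
      rw [← Real.mul_rpow (by positivity) (by positivity)]
      rw [show (π / t) * (π / (1 / (4 * t))) = (2 * π) ^ 2 by field_simp; ring]
      rw [← Real.rpow_natCast (2 * π) 2, ← Real.rpow_mul (by positivity)]
      rw [show ((2:ℕ) : ℝ) * ((d : ℝ) / 2) = ((d : ℕ) : ℝ) by push_cast; ring]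
      rw [Real.rpow_natCast]
    -- pass to lintegrals
    have hNaesm : AEStronglyMeasurable
        (fun p : Rd d × Rd d => ‖f₀ p.1‖ * ‖f₀ p.2‖ * Kr (p.1 - p.2))
        ((volume : Measure (Rd d)).prod volume) := by
      refine AEStronglyMeasurable.mul (AEStronglyMeasurable.mul ?_ ?_) ?_
      · exact hL1.norm.aestronglyMeasurable.comp_fst
      · exact hL1.norm.aestronglyMeasurable.comp_snd
      · exact (hKrcont.comp (continuous_fst.sub continuous_snd)).aestronglyMeasurable
    have hNint_eq : ∫ p : Rd d × Rd d, ‖f₀ p.1‖ * ‖f₀ p.2‖ * Kr (p.1 - p.2) ∂(volume.prod volume)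
        = (∫⁻ p : Rd d × Rd d, ENNReal.ofReal (‖f₀ p.1‖ * ‖f₀ p.2‖ * Kr (p.1 - p.2))
            ∂(volume.prod volume)).toReal := by
      refine integral_eq_lintegral_of_nonneg_ae (Filter.Eventually.of_forall fun p => ?_) hNaesm
      have := hKr0 (p.1 - p.2)
      positivity
    -- the ℝ≥0∞-valued pieces
    set q : Rd d → ℝ≥0∞ := fun ξ => ENNReal.ofReal (‖f₀ ξ‖ ^ 2) with hqdef
    set k : Rd d → ℝ≥0∞ := fun u => ENNReal.ofReal (Kr u) with hkdef
    have hqmeas : Measurable q := by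
      rw [hqdef]
      exact ENNReal.measurable_ofReal.comp ((hm.measurable.norm).pow_const 2)
    have hkmeas : Measurable k := by
      rw [hkdef]
      exact ENNReal.measurable_ofReal.comp hKrcont.measurable
    have hm1 : Measurable (fun p : Rd d × Rd d => q p.1 * k (p.1 - p.2)) :=
      (hqmeas.comp measurable_fst).mul (hkmeas.comp (measurable_fst.sub measurable_snd))
    have hm2 : Measurable (fun p : Rd d × Rd d => q p.2 * k (p.1 - p.2)) :=
      (hqmeas.comp measurable_snd).mul (hkmeas.comp (measurable_fst.sub measurable_snd))
    have hqint : ∫⁻ ξ, q ξ ∂volume = ENNReal.ofReal L2r := by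
      rw [hqdef, hL2rdef]
      exact (ofReal_integral_eq_lintegral_ofReal haint
        (Filter.Eventually.of_forall fun ξ => sq_nonneg _)).symm
    have hkint : ∫⁻ u, k u ∂volume = ENNReal.ofReal ((2 * π) ^ d) := by
      rw [hkdef, ← hKrval]
      exact (ofReal_integral_eq_lintegral_ofReal hKrint
        (Filter.Eventually.of_forall hKr0)).symm
    have hT1 : ∫⁻ p : Rd d × Rd d, q p.1 * k (p.1 - p.2) ∂(volume.prod volume)
        = ENNReal.ofReal L2r * ENNReal.ofReal ((2 * π) ^ d) := by
      rw [lintegral_prod _ hm1.aemeasurable]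
      rw [lintegral_congr (fun ξ : Rd d => by
        rw [lintegral_const_mul' _ _ ENNReal.ofReal_ne_top,
          (Measure.measurePreserving_sub_left volume ξ).lintegral_comp hkmeas, hkint] :
        ∀ ξ : Rd d, (∫⁻ η, q ξ * k (ξ - η) ∂volume) = q ξ * ENNReal.ofReal ((2 * π) ^ d))]
      rw [lintegral_mul_const' _ _ ENNReal.ofReal_ne_top, hqint]
    have hT2 : ∫⁻ p : Rd d × Rd d, q p.2 * k (p.1 - p.2) ∂(volume.prod volume)
        = ENNReal.ofReal L2r * ENNReal.ofReal ((2 * π) ^ d) := by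
      rw [lintegral_prod_symm _ hm2.aemeasurable]
      rw [lintegral_congr (fun η : Rd d => by
        rw [lintegral_const_mul' _ _ ENNReal.ofReal_ne_top,
          (measurePreserving_sub_right volume η).lintegral_comp hkmeas, hkint] :
        ∀ η : Rd d, (∫⁻ ξ, q η * k (ξ - η) ∂volume) = q η * ENNReal.ofReal ((2 * π) ^ d))]
      rw [lintegral_mul_const' _ _ ENNReal.ofReal_ne_top, hqint]
    have hlin : ∫⁻ p : Rd d × Rd d, ENNReal.ofReal (‖f₀ p.1‖ * ‖f₀ p.2‖ * Kr (p.1 - p.2))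
        ∂(volume.prod volume) ≤ ENNReal.ofReal ((2 * π) ^ d * L2r) := by
      have hpt : ∀ p : Rd d × Rd d, ENNReal.ofReal (‖f₀ p.1‖ * ‖f₀ p.2‖ * Kr (p.1 - p.2))
          ≤ (2 : ℝ≥0∞)⁻¹ * ((q p.1 + q p.2) * k (p.1 - p.2)) := by
        intro p
        have hr : ‖f₀ p.1‖ * ‖f₀ p.2‖ * Kr (p.1 - p.2)
            ≤ 2⁻¹ * ((‖f₀ p.1‖ ^ 2 + ‖f₀ p.2‖ ^ 2) * Kr (p.1 - p.2)) := by
          have h2 := two_mul_le_add_sq ‖f₀ p.1‖ ‖f₀ p.2‖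
          nlinarith [hKr0 (p.1 - p.2), mul_le_mul_of_nonneg_right
            (show ‖f₀ p.1‖ * ‖f₀ p.2‖ ≤ 2⁻¹ * (‖f₀ p.1‖ ^ 2 + ‖f₀ p.2‖ ^ 2) by linarith)
            (hKr0 (p.1 - p.2))]
        refine (ENNReal.ofReal_le_ofReal hr).trans (le_of_eq ?_)
        rw [ENNReal.ofReal_mul (by norm_num), ENNReal.ofReal_mul (by positivity),
          ENNReal.ofReal_add (sq_nonneg _) (sq_nonneg _)]
        congr 1
        rw [ENNReal.ofReal_inv_of_pos (by norm_num)]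
        norm_num
      calc ∫⁻ p : Rd d × Rd d, ENNReal.ofReal (‖f₀ p.1‖ * ‖f₀ p.2‖ * Kr (p.1 - p.2))
            ∂(volume.prod volume)
          ≤ ∫⁻ p : Rd d × Rd d, (2 : ℝ≥0∞)⁻¹ * ((q p.1 + q p.2) * k (p.1 - p.2))
            ∂(volume.prod volume) := lintegral_mono hpt
        _ = (2 : ℝ≥0∞)⁻¹ * ∫⁻ p : Rd d × Rd d, ((q p.1 + q p.2) * k (p.1 - p.2))
            ∂(volume.prod volume) := lintegral_const_mul' _ _ (by simp)
        _ = (2 : ℝ≥0∞)⁻¹ * (∫⁻ p : Rd d × Rd d, q p.1 * k (p.1 - p.2) ∂(volume.prod volume)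
            + ∫⁻ p : Rd d × Rd d, q p.2 * k (p.1 - p.2) ∂(volume.prod volume)) := by
            congr 1
            rw [← lintegral_add_left' hm1.aemeasurable]
            exact lintegral_congr fun p => by rw [add_mul]
        _ = ENNReal.ofReal ((2 * π) ^ d * L2r) := by
            rw [hT1, hT2, ← two_mul, ← mul_assoc,
              ENNReal.inv_mul_cancel two_ne_zero ENNReal.ofNat_ne_top, one_mul,
              ← ENNReal.ofReal_mul hL2r0, mul_comm]
    -- put everything together
    rw [hstep0]
    calc J.re ≤ ‖J‖ := by exact Complex.re_le_norm J
      _ ≤ ∫ p : Rd d × Rd d, ‖f₀ p.1‖ * ‖f₀ p.2‖ * Kr (p.1 - p.2) ∂(volume.prod volume) := hJnorm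
      _ ≤ (2 * π) ^ d * L2r := by
          rw [hNint_eq]
          exact ENNReal.toReal_le_of_le_ofReal (by positivity) hlin
  -- monotone limit as the Gaussian width tends to infinity
  set h : ℕ → Rd d → ℝ≥0∞ :=
    fun n v => ENNReal.ofReal (‖g v‖ ^ 2 * rexp (-(1 / (n + 1)) * ‖v‖ ^ 2)) with hhdef
  have hhm : ∀ n, Measurable (h n) := by
    intro n
    rw [hhdef]
    exact ENNReal.measurable_ofReal.comp ((hgcont.norm.pow 2).mul
      (Real.continuous_exp.comp ((continuous_const.mul (continuous_norm.pow 2))))).measurable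
  have hhmono : Monotone h := by
    intro m n hmn
    intro v
    rw [hhdef]
    beta_reduce
    apply ENNReal.ofReal_le_ofReal
    refine mul_le_mul_of_nonneg_left ?_ (sq_nonneg _)
    apply Real.exp_le_exp.mpr
    have h1 : (1:ℝ) / (n + 1) ≤ 1 / (m + 1) := by
      apply one_div_le_one_div_of_le (by positivity)
      have : (m : ℝ) ≤ (n : ℝ) := by exact_mod_cast hmn
      linarith
    nlinarith [sq_nonneg ‖v‖]
  have hsup : ∀ v : Rd d, (⨆ n, h n v) = (‖g v‖₊ : ℝ≥0∞) ^ (2:ℝ) := by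
    intro v
    have htend : Filter.Tendsto (fun n : ℕ => h n v) Filter.atTop
        (nhds (ENNReal.ofReal (‖g v‖ ^ 2))) := by
      rw [hhdef]
      apply ENNReal.tendsto_ofReal
      have h1 : Filter.Tendsto (fun n : ℕ => (1:ℝ) / (n + 1)) Filter.atTop (nhds 0) :=
        tendsto_one_div_add_atTop_nhds_zero_nat
      have h2 : Filter.Tendsto (fun n : ℕ => rexp (-(1 / (n + 1)) * ‖v‖ ^ 2)) Filter.atTop
          (nhds 1) := by
        have h3 : Filter.Tendsto (fun n : ℕ => -((1:ℝ) / (n + 1)) * ‖v‖ ^ 2) Filter.atTop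
            (nhds 0) := by simpa using h1.neg.mul_const (‖v‖ ^ 2)
        have h4 : Filter.Tendsto (fun n : ℕ => rexp (-((1:ℝ) / (n + 1)) * ‖v‖ ^ 2))
            Filter.atTop (nhds (rexp 0)) := (Real.continuous_exp.continuousAt).tendsto.comp h3
        simpa [Real.exp_zero] using h4
      simpa using tendsto_const_nhds.mul h2
    rw [iSup_eq_of_tendsto (fun a b hab => hhmono hab v) htend]
    rw [show ((2:ℝ)) = ((2:ℕ):ℝ) by norm_num, ENNReal.rpow_natCast,
      ← ENNReal.ofReal_coe_nnreal, coe_nnnorm, ← ENNReal.ofReal_pow (norm_nonneg _)]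
  have hglim : ∫⁻ v : Rd d, (‖g v‖₊ : ℝ≥0∞) ^ (2:ℝ) ∂volume
      ≤ ENNReal.ofReal ((2 * π) ^ d * L2r) := by
    calc ∫⁻ v : Rd d, (‖g v‖₊ : ℝ≥0∞) ^ (2:ℝ) ∂volume
        = ∫⁻ v, ⨆ n, h n v ∂volume := lintegral_congr fun v => (hsup v).symm
      _ = ⨆ n, ∫⁻ v, h n v ∂volume := lintegral_iSup hhm hhmono
      _ ≤ ENNReal.ofReal ((2 * π) ^ d * L2r) := by
          refine iSup_le fun n => ?_
          have hn : (0:ℝ) < 1 / (n + 1) := by positivity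
          have hintn : Integrable
              (fun v : Rd d => ‖g v‖ ^ 2 * rexp (-(1 / (n + 1)) * ‖v‖ ^ 2)) volume := by
            have hga : Integrable (fun v : Rd d => M ^ 2 * rexp (-(1 / (n + 1)) * ‖v‖ ^ 2))
              volume := (hgaussAll _ hn).const_mul _
            refine hga.mono' ?_ (Filter.Eventually.of_forall fun v => ?_)
            · exact ((hgcont.norm.pow 2).mul (Real.continuous_exp.comp
                ((continuous_const.mul (continuous_norm.pow 2))))).aestronglyMeasurable
            · have h0 : (0:ℝ) ≤ rexp (-(1 / (n + 1)) * ‖v‖ ^ 2) := (Real.exp_pos _).le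
              have hb : ‖g v‖ ^ 2 ≤ M ^ 2 := by nlinarith [hgbd v, norm_nonneg (g v)]
              rw [Real.norm_eq_abs, abs_of_nonneg (by positivity)]
              exact mul_le_mul_of_nonneg_right hb h0
          rw [hhdef]
          rw [← ofReal_integral_eq_lintegral_ofReal hintn
            (Filter.Eventually.of_forall fun v => by positivity)]
          exact ENNReal.ofReal_le_ofReal (key _ hn)
  have hg2 : MemLp g 2 volume := by
    refine ⟨hgcont.aestronglyMeasurable, ?_⟩
    rw [eLpNorm_eq_lintegral_rpow_enorm_toReal two_ne_zero ENNReal.ofNat_ne_top]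
    refine ENNReal.rpow_lt_top_of_nonneg (by positivity) ?_
    rw [show ((2:ℝ≥0∞).toReal) = (2:ℝ) by norm_num]
    exact (hglim.trans_lt ENNReal.ofReal_lt_top).ne
  have hre : MemLp (fun x : Rd d => (g x).re) 2 volume := by
    have h := hg2.re
    simpa using h
  have heq : (fun x : Rd d => (FTinv f₀ x).re) = fun x : Rd d => c * (g x).re := by
    funext x
    show (c • g x).re = _
    rw [Complex.real_smul, Complex.re_ofReal_mul]
  rw [heq]
  have h2 := hre.const_smul (c : ℝ)
  exact h2

theorem barron_bound_aux {d : ℕ} (f₀ : Rd d → ℂ)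
    (hL1 : Integrable f₀ volume) (hL2 : MemLp f₀ 2 volume)
    (Rf : ℝ) (hRf : 0 < Rf) (hsupp : ∀ ξ : Rd d, Rf < ‖ξ‖ → f₀ ξ = 0) :
      barronNorm Real.cos Set.univ Rf (fun x => (FTinv f₀ x).re) ≤
        ENNReal.ofReal (((2 * π) ^ (-(d : ℝ) / 2) : ℝ) * ∫ ξ : Rd d, ‖f₀ ξ‖) := by
  set c : ℝ := ((2 * π) ^ (-(d : ℝ) / 2) : ℝ) with hcdef
  have hc : 0 < c := Real.rpow_pos_of_pos (by positivity) _
  have hInt : ∀ x : Rd d,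
      Integrable (fun ξ => Complex.exp (((inner ℝ x ξ : ℝ) : ℂ) * Complex.I) * f₀ ξ) volume := by
    intro x
    have hcont : Continuous fun ξ : Rd d => Complex.exp (((inner ℝ x ξ : ℝ) : ℂ) * Complex.I) :=
      Complex.continuous_exp.comp ((Complex.continuous_ofReal.comp
        ((continuous_const (y := x)).inner continuous_id)).mul continuous_const)
    refine Integrable.bdd_mul hL1 hcont.aestronglyMeasurable (c := 1) (Filter.Eventually.of_forall fun ξ => ?_)
    rw [Complex.norm_exp_ofReal_mul_I]
  set B := Metric.closedBall (0 : Rd d) Rf with hBdef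
  have hB : MeasurableSet B := measurableSet_closedBall
  set V : ℝ≥0∞ := volume B with hVdef
  have hV0 : V ≠ 0 := (Metric.measure_closedBall_pos volume 0 hRf).ne'
  have hVt : V ≠ ⊤ := measure_closedBall_lt_top.ne
  set Vr : ℝ := V.toReal with hVrdef
  have hVr : 0 < Vr := ENNReal.toReal_pos hV0 hVt
  set ν : Measure (Rd d) := V⁻¹ • volume.restrict B with hνdef
  have hν : IsProbabilityMeasure ν :=
    ⟨by simp [hνdef, Measure.restrict_apply, Set.univ_inter, ENNReal.inv_mul_cancel hV0 hVt]; exact ENNReal.inv_mul_cancel hV0 hVt⟩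
  set T : Rd d → ℝ × Rd d × ℝ := fun ξ => (c * Vr * ‖f₀ ξ‖, ξ, (f₀ ξ).arg) with hTdef
  have hf₀m : AEMeasurable f₀ ν := by
    exact ((hL1.aemeasurable.restrict (s := B)).smul_measure _)
  have hT : AEMeasurable T ν := by
    refine AEMeasurable.prodMk ?_ (AEMeasurable.prodMk aemeasurable_id ?_)
    · exact hf₀m.norm.const_mul _
    · exact Complex.measurable_arg.comp_aemeasurable hf₀m
  set ρ := ν.map T with hρdef
  have hρmem : ρ ∈ barronReps Real.cos Set.univ Rf (fun x => (FTinv f₀ x).re) := by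
    refine ⟨Measure.isProbabilityMeasure_map hT, ?_, ?_⟩
    · rw [MeasureTheory.ae_map_iff hT
        (measurableSet_le (measurable_snd.fst.norm) measurable_const)]
      refine Measure.ae_smul_measure ?_ _
      filter_upwards [ae_restrict_mem hB] with ξ hξ
      simpa [hTdef] using mem_closedBall_zero_iff.mp hξ
    · intro x _
      have hmeas : AEStronglyMeasurable
          (fun q : ℝ × Rd d × ℝ => q.1 * Real.cos (inner ℝ q.2.1 x + q.2.2)) ρ := by
        exact (continuous_fst.mul (Real.continuous_cos.comp
          (((continuous_snd.fst).inner continuous_const).add (continuous_snd.snd)))).aestronglyMeasurable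
      rw [hρdef, integral_map hT hmeas]
      simp only [hTdef]
      rw [hνdef, integral_smul_measure]
      have hfun : ∀ ξ : Rd d, c * Vr * ‖f₀ ξ‖ * Real.cos ((inner ℝ ξ x : ℝ) + (f₀ ξ).arg)
          = (c * Vr) * (‖f₀ ξ‖ * Real.cos ((inner ℝ x ξ : ℝ) + (f₀ ξ).arg)) := by
        intro ξ; rw [real_inner_comm]; ring
      simp only [hfun]
      rw [integral_const_mul, setIntegral_eq_integral_of_forall_compl_eq_zero (fun ξ hξ => by
        have : f₀ ξ = 0 := hsupp ξ (by
          simpa [hBdef, mem_closedBall_zero_iff] using hξ)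
        simp [this])]
      have hre : ∀ ξ : Rd d, ‖f₀ ξ‖ * Real.cos ((inner ℝ x ξ : ℝ) + (f₀ ξ).arg)
          = (Complex.exp (((inner ℝ x ξ : ℝ) : ℂ) * Complex.I) * f₀ ξ).re :=
        fun ξ => (re_exp_mul_helper _ _).symm
      simp only [hre]
      have : (∫ ξ, (Complex.exp (((inner ℝ x ξ : ℝ) : ℂ) * Complex.I) * f₀ ξ).re ∂volume)
          = (∫ ξ, Complex.exp (((inner ℝ x ξ : ℝ) : ℂ) * Complex.I) * f₀ ξ ∂volume).re := by
        simpa using integral_re (hInt x)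
      rw [this]
      show (FTinv f₀ x).re = _
      rw [FTinv, Complex.real_smul, Complex.re_ofReal_mul]
      rw [ENNReal.toReal_inv]
      rw [← hVrdef]
      field_simp
      simp only [smul_eq_mul, mul_comm Complex.I]
      rw [hcdef, neg_div, one_div, ← mul_assoc, ← mul_assoc, inv_mul_cancel₀ hVr.ne', one_mul]
  calc barronNorm Real.cos Set.univ Rf (fun x => (FTinv f₀ x).re)
      ≤ ∫⁻ q, (‖q.1‖₊ : ℝ≥0∞) ∂ρ := iInf₂_le ρ hρmem
    _ ≤ ENNReal.ofReal (c * ∫ ξ : Rd d, ‖f₀ ξ‖) := by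
        rw [hρdef, lintegral_map' (by fun_prop) hT]
        simp only [hTdef]
        rw [hνdef, lintegral_smul_measure]
        have h1 : ∀ ξ : Rd d, ((‖c * Vr * ‖f₀ ξ‖‖₊ : ℝ≥0) : ℝ≥0∞)
            = ENNReal.ofReal (c * Vr) * ENNReal.ofReal ‖f₀ ξ‖ := by
          intro ξ
          rw [← enorm_eq_nnnorm, ← Real.enorm_eq_ofReal (by positivity), ← Real.enorm_eq_ofReal (norm_nonneg _),
            ← enorm_mul]
        simp only [h1]
        rw [lintegral_const_mul' _ _ (by simp)]
        have h2 : ∫⁻ ξ in B, ENNReal.ofReal ‖f₀ ξ‖ ≤ ∫⁻ ξ, ENNReal.ofReal ‖f₀ ξ‖ :=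
          lintegral_mono' Measure.restrict_le_self le_rfl
        have h3 : ∫⁻ ξ, ENNReal.ofReal ‖f₀ ξ‖ = ENNReal.ofReal (∫ ξ, ‖f₀ ξ‖) :=
          (ofReal_integral_eq_lintegral_ofReal hL1.norm
            (Filter.Eventually.of_forall fun ξ => norm_nonneg _)).symm
        calc V⁻¹ * (ENNReal.ofReal (c * Vr) * ∫⁻ ξ in B, ENNReal.ofReal ‖f₀ ξ‖)
            ≤ V⁻¹ * (ENNReal.ofReal (c * Vr) * ENNReal.ofReal (∫ ξ, ‖f₀ ξ‖)) := by
              gcongr; rw [← h3]; exact h2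
          _ = ENNReal.ofReal (c * ∫ ξ, ‖f₀ ξ‖) := by
              rw [ENNReal.ofReal_mul hc.le, ENNReal.ofReal_mul hc.le,
                ENNReal.ofReal_toReal hVt]
              rw [show V⁻¹ * (ENNReal.ofReal c * V * ENNReal.ofReal (∫ ξ, ‖f₀ ξ‖))
                  = (V⁻¹ * V) * (ENNReal.ofReal c * ENNReal.ofReal (∫ ξ, ‖f₀ ξ‖)) by ring,
                ENNReal.inv_mul_cancel hV0 hVt, one_mul]

/-- Proposition: if `f₀ ∈ L²(ℝ^d) ∩ L¹(ℝ^d)` is complex-valued and supported in the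
closed ball of radius `R_f`, then `f = Re(F⁻¹f₀)` belongs to `L²(ℝ^d) ∩ B^1_{R_f}(ℝ^d)`
for the cosine activation, with `‖f‖_{B^1_{R_f}(ℝ^d)} ≤ (2π)^{-d/2} ‖f₀‖_{L¹(ℝ^d)}`. -/
theorem re_inv_fourier_is_barron {d : ℕ} (f₀ : Rd d → ℂ)
    (hL1 : Integrable f₀ volume) (hL2 : MemLp f₀ 2 volume)
    (Rf : ℝ) (hRf : 0 < Rf) (hsupp : ∀ ξ : Rd d, Rf < ‖ξ‖ → f₀ ξ = 0) :
    MemLp (fun x => (FTinv f₀ x).re) 2 volume ∧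
      barronNorm Real.cos Set.univ Rf (fun x => (FTinv f₀ x).re) ≤
        ENNReal.ofReal (((2 * π) ^ (-(d : ℝ) / 2) : ℝ) * ∫ ξ : Rd d, ‖f₀ ξ‖) := by
  constructor
  · have hsm := hL1.aestronglyMeasurable
    have hae : f₀ =ᵐ[volume] hsm.mk f₀ := hsm.ae_eq_mk
    have heq : (fun x => (FTinv f₀ x).re) = fun x => (FTinv (hsm.mk f₀) x).re := by
      funext x
      congr 1
      unfold FTinv
      congr 1
      exact integral_congr_ae (by filter_upwards [hae] with ξ hξ; rw [hξ])
    rw [heq]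
    exact part1meas (hsm.mk f₀) hsm.stronglyMeasurable_mk (hL1.congr hae) (hL2.ae_eq hae)
  · exact barron_bound_aux f₀ hL1 hL2 Rf hRf hsupp
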